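/- Let G₀ be the semidirect product (ℤ³ ⊕ ℤ³) ⋊ SL(3,ℤ), where SL(3,ℤ) acts by A · (x,y) = (Ax, (Aᵀ)⁻¹y), and for α ∈ ℝ let Ω̃_α be the 2-cocycle on G₀ defined by Ω̃_α((v,A),(w,B)) = Ω_α(v, A · w). If for α, β ∈ ℝ the cocycles Ω̃_α and Ω̃_β on G₀ are cohomologous, i.e. there exists μ : G₀ → S¹ with Ω̃_α(g,h) = μ(g) μ(h) μ(gh)⁻¹ Ω̃_β(g,h) for all g, h ∈ G₀, then 2(α − β) is an integer. In particular, the cohomology classes of the cocycles Ω̃_α on (ℤ³ ⊕ ℤ³) ⋊ SL(3,ℤ), for α ranging over [0, 1/2), are pairwise distinct. -/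

import Mathlib

open Matrix

/-- The additive group `R³ ⊕ R³`. -/
abbrev VV (R : Type*) := (Fin 3 → R) × (Fin 3 → R)

/-- Transpose, as a map on `SL(3,R)`. -/
def transposeSL {R : Type*} [CommRing R] (A : Matrix.SpecialLinearGroup (Fin 3) R) :
    Matrix.SpecialLinearGroup (Fin 3) R :=
  ⟨A.val.transpose, by rw [Matrix.det_transpose]; exact A.prop⟩

/-- The group homomorphism `A ↦ (Aᵀ)⁻¹` on `SL(3,R)`. -/
def dualHom {R : Type*} [CommRing R] :
    Matrix.SpecialLinearGroup (Fin 3) R →* Matrix.SpecialLinearGroup (Fin 3) R where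
  toFun A := (transposeSL A)⁻¹
  map_one' := by
    simp [transposeSL]
    exact inv_one
  map_mul' A B := by
    show (transposeSL (A * B))⁻¹ = (transposeSL A)⁻¹ * (transposeSL B)⁻¹
    have h : transposeSL (A * B) = transposeSL B * transposeSL A :=
      Subtype.ext (by simp [transposeSL, Matrix.transpose_mul]; rfl)
    rw [h, _root_.mul_inv_rev]

/-- The (multiplicative) group structure on `AddAut A` by composition, as in the older Mathlib. -/
instance addAutGroupOld {A : Type*} [Add A] : Group (AddAut A) where
  mul g h := AddEquiv.trans h g
  one := AddEquiv.refl _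
  inv := AddEquiv.symm
  mul_assoc _ _ _ := rfl
  one_mul _ := rfl
  mul_one _ := rfl
  inv_mul_cancel := AddEquiv.self_trans_symm

/-- Linear automorphisms as additive automorphisms, as a group homomorphism. -/
def linToAddAut {R : Type*} [CommRing R] :
    ((Fin 3 → R) ≃ₗ[R] (Fin 3 → R)) →* AddAut (Fin 3 → R) where
  toFun e := e.toAddEquiv
  map_one' := rfl
  map_mul' _ _ := rfl

/-- Pairs of additive automorphisms give additive automorphisms of the product. -/
def addAutProd {R : Type*} [CommRing R] :
    AddAut (Fin 3 → R) × AddAut (Fin 3 → R) →* AddAut (VV R) where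
  toFun p := AddEquiv.prodCongr p.1 p.2
  map_one' := rfl
  map_mul' _ _ := rfl

/-- The action of `SL(3,R)` on `R³ ⊕ R³` given by `A · (x,y) = (Ax, (Aᵀ)⁻¹y)`,
as a homomorphism into additive automorphisms. -/
noncomputable def sl3Act {R : Type*} [CommRing R] :
    Matrix.SpecialLinearGroup (Fin 3) R →* AddAut (VV R) :=
  addAutProd.comp
    (((linToAddAut.comp Matrix.SpecialLinearGroup.toLin')).prod
      ((linToAddAut.comp Matrix.SpecialLinearGroup.toLin').comp dualHom))

/-- Additive automorphisms as multiplicative automorphisms of `Multiplicative`. -/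
def addAutToMulAut {A : Type*} [AddGroup A] : AddAut A →* MulAut (Multiplicative A) where
  toFun e := AddEquiv.toMultiplicative e
  map_one' := rfl
  map_mul' _ _ := rfl

/-- The action of `SL(3,R)` on `Multiplicative (R³ ⊕ R³)`. -/
noncomputable def sl3ActM (R : Type*) [CommRing R] :
    Matrix.SpecialLinearGroup (Fin 3) R →* MulAut (Multiplicative (VV R)) :=
  addAutToMulAut.comp sl3Act

/-- The group `Γ_R = (R³ ⊕ R³) ⋊ SL(3,R)`. -/
abbrev GammaR (R : Type*) [CommRing R] :=
  SemidirectProduct (Multiplicative (VV R)) (Matrix.SpecialLinearGroup (Fin 3) R) (sl3ActM R)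

/-- Coordinatewise integer casting `ℤ³ → ℚ³` as an additive homomorphism. -/
def intCast3 : (Fin 3 → ℤ) →+ (Fin 3 → ℚ) := (Int.castAddHom ℚ).compLeft (Fin 3)

/-- The inclusion `ℤ³ ⊕ ℤ³ → ℚ³ ⊕ ℚ³`. -/
def intVec : VV ℤ →+ VV ℚ := intCast3.prodMap intCast3

/-- The subgroup `Λ = ℤ³ ⊕ ℤ³` of `Γ = (ℚ³ ⊕ ℚ³) ⋊ SL(3,ℚ)`. -/
noncomputable def LambdaSub : Subgroup (GammaR ℚ) :=
  (AddSubgroup.toSubgroup intVec.range).map SemidirectProduct.inl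

/-- The dot product on `R³`. -/
def dotR {R : Type*} [CommRing R] (x y : Fin 3 → R) : R := ∑ i, x i * y i

/-- The 2-cocycle `Ω_α` on `ℚ³ ⊕ ℚ³`. -/
noncomputable def OmegaQ (α : ℝ) (g h : VV ℚ) : Circle :=
  Circle.exp (2 * Real.pi * α * ((dotR g.1 h.2 - dotR g.2 h.1 : ℚ) : ℝ))

/-- The extension `Ω̃_α` of `Ω_α` to `Γ = (ℚ³ ⊕ ℚ³) ⋊ SL(3,ℚ)`. -/
noncomputable def OmegaT (α : ℝ) (g h : GammaR ℚ) : Circle :=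
  OmegaQ α (Multiplicative.toAdd g.left) (sl3Act g.right (Multiplicative.toAdd h.left))

/-- The 2-cocycle `Ω̃_α((v,A),(w,B)) = Ω_α(v, A·w)` on `G₀ = (ℤ³ ⊕ ℤ³) ⋊ SL(3,ℤ)`. -/
noncomputable def OmegaTZ (α : ℝ) (g h : GammaR ℤ) : Circle :=
  OmegaQ α (intVec (Multiplicative.toAdd g.left))
    (intVec (sl3Act g.right (Multiplicative.toAdd h.left)))

private lemma omegaTZ_inl_aux (α : ℝ) (v w : VV ℤ) :
    OmegaTZ α (SemidirectProduct.inl (Multiplicative.ofAdd v))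
      (SemidirectProduct.inl (Multiplicative.ofAdd w)) =
    Circle.exp (2 * Real.pi * α *
      ((dotR (intVec v).1 (intVec w).2 - dotR (intVec v).2 (intVec w).1 : ℚ) : ℝ)) := by
  simp [OmegaTZ, OmegaQ, SemidirectProduct.left_inl, SemidirectProduct.right_inl]
  rfl

private lemma omegaTZ_ef (α : ℝ) :
    OmegaTZ α (SemidirectProduct.inl (Multiplicative.ofAdd ((Pi.single 0 1, 0) : VV ℤ)))
      (SemidirectProduct.inl (Multiplicative.ofAdd ((0, Pi.single 0 1) : VV ℤ))) =
    Circle.exp (2 * Real.pi * α) := by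
  rw [omegaTZ_inl_aux]
  norm_num [intVec, intCast3, dotR, Fin.sum_univ_three, Pi.single_apply]

private lemma omegaTZ_fe (α : ℝ) :
    OmegaTZ α (SemidirectProduct.inl (Multiplicative.ofAdd ((0, Pi.single 0 1) : VV ℤ)))
      (SemidirectProduct.inl (Multiplicative.ofAdd ((Pi.single 0 1, 0) : VV ℤ))) =
    Circle.exp (-(2 * Real.pi * α)) := by
  rw [omegaTZ_inl_aux]
  norm_num [intVec, intCast3, dotR, Fin.sum_univ_three, Pi.single_apply]

private lemma main_part (α β : ℝ)
    (H : ∃ μ : GammaR ℤ → Circle, ∀ g h : GammaR ℤ,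
        OmegaTZ α g h = μ g * μ h * (μ (g * h))⁻¹ * OmegaTZ β g h) :
    ∃ n : ℤ, 2 * (α - β) = (n : ℝ) := by
  obtain ⟨μ, hμ⟩ := H
  set g : GammaR ℤ :=
    SemidirectProduct.inl (Multiplicative.ofAdd ((Pi.single 0 1, 0) : VV ℤ)) with hg
  set h : GammaR ℤ :=
    SemidirectProduct.inl (Multiplicative.ofAdd ((0, Pi.single 0 1) : VV ℤ)) with hh
  have hcomm : g * h = h * g := by
    rw [hg, hh,
      ← _root_.map_mul (SemidirectProduct.inl : Multiplicative (VV ℤ) →* GammaR ℤ),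
      ← _root_.map_mul (SemidirectProduct.inl : Multiplicative (VV ℤ) →* GammaR ℤ), mul_comm]
  have h1 := hμ g h
  have h2 := hμ h g
  have e1 : OmegaTZ α g h * (OmegaTZ β g h)⁻¹ = μ g * μ h * (μ (g * h))⁻¹ := by
    rw [h1]; group
  have e2 : OmegaTZ α h g * (OmegaTZ β h g)⁻¹ = μ h * μ g * (μ (g * h))⁻¹ := by
    rw [h2, hcomm]; group
  have key : OmegaTZ α g h * (OmegaTZ β g h)⁻¹ = OmegaTZ α h g * (OmegaTZ β h g)⁻¹ := by
    rw [e1, e2, mul_comm (μ g) (μ h)]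
  rw [omegaTZ_ef α, omegaTZ_fe α, omegaTZ_ef β, omegaTZ_fe β, ← Circle.exp_neg,
    ← Circle.exp_neg, ← Circle.exp_add, ← Circle.exp_add, neg_neg] at key
  obtain ⟨m, hm⟩ := Circle.exp_eq_exp.mp key
  refine ⟨m, ?_⟩
  have hπ : (Real.pi : ℝ) ≠ 0 := Real.pi_ne_zero
  have h0 : 2 * Real.pi * (2 * (α - β) - (m : ℝ)) = 0 := by ring_nf; ring_nf at hm; linarith
  have h2π : (2 * Real.pi : ℝ) ≠ 0 := by positivity
  have := mul_eq_zero.mp h0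
  rcases this with h' | h'
  · exact absurd h' h2π
  · linarith

/-- If the 2-cocycles `Ω̃_α` and `Ω̃_β` on `G₀ = (ℤ³ ⊕ ℤ³) ⋊ SL(3,ℤ)` are
cohomologous then `2(α − β) ∈ ℤ`; in particular the cohomology classes of the `Ω̃_α`,
`α ∈ [0, 1/2)`, are pairwise distinct. -/
theorem OmegaTZ_cohomologous_iff :
    (∀ α β : ℝ,
      (∃ μ : GammaR ℤ → Circle, ∀ g h : GammaR ℤ,
        OmegaTZ α g h = μ g * μ h * (μ (g * h))⁻¹ * OmegaTZ β g h) →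
      ∃ n : ℤ, 2 * (α - β) = (n : ℝ)) ∧
    (∀ α β : ℝ, α ∈ Set.Ico (0 : ℝ) (1 / 2) → β ∈ Set.Ico (0 : ℝ) (1 / 2) → α ≠ β →
      ¬ ∃ μ : GammaR ℤ → Circle, ∀ g h : GammaR ℤ,
        OmegaTZ α g h = μ g * μ h * (μ (g * h))⁻¹ * OmegaTZ β g h) := by
  constructor
  · exact main_part
  · intro α β hα hβ hne ⟨μ, hμ⟩
    obtain ⟨n, hn⟩ := main_part α β ⟨μ, hμ⟩
    have h1 : (n : ℝ) < 1 := by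
      rw [← hn]
      simp only [Set.mem_Ico] at hα hβ
      linarith [hα.1, hα.2, hβ.1, hβ.2]
    have h2 : (-1 : ℝ) < (n : ℝ) := by
      rw [← hn]
      simp only [Set.mem_Ico] at hα hβ
      linarith [hα.1, hα.2, hβ.1, hβ.2]
    have hn0 : n = 0 := by
      have := (Int.lt_iff_add_one_le).mp (by exact_mod_cast h1 : n < 1)
      have := (Int.lt_iff_add_one_le).mp (by exact_mod_cast h2 : (-1 : ℤ) < n)
      omega
    apply hne
    rw [hn0] at hn
    simp at hn
    linarith
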